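/- Proposition (Taylor expansion of the symbol of the operator L^k for symmetric ERKN coefficients): Suppose the ERKN coefficients satisfy the symmetry conditions, with b̄₁ = b̄₁(hω) ≠ 0 and cos(hω/2) ≠ 0, and let L be the scalar symbol defined below, analytic near z = 0. Then: (i) if a = ω (resp. a = −ω), then L(0) = 0, L'(0) = 2i·sin(hω/2)/b̄₁ (resp. L'(0) = −2i·sin(hω/2)/b̄₁) and L''(0) = cos(hω)·sec(hω/2)/b̄₁; (ii) for arbitrary real a, L(0) = 2·sec(hω/2)·sin((h/2)(ω + a))·sin((h/2)(ω − a))/b̄₁ and L'(0) = i·sec(hω/2)·sin(ha)/b̄₁. -/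

import Mathlib

set_option maxHeartbeats 1000000


noncomputable section

/-- `sinc x = sin x / x`, with `sinc 0 = 1`. -/
def sinc (x : ℝ) : ℝ := if x = 0 then 1 else Real.sin x / x

/-- the scalar symbol L₁ of the operator L₁^k at frequency ω and phase a = k·ω -/
def symbL1 (h ω a : ℝ) (b1 bb1 : ℝ) (z : ℂ) : ℂ :=
  (Complex.exp (Complex.I * (h * a : ℝ)) * Complex.exp z - (Real.cos (h * ω) : ℂ)
      - ((h * ω * Real.sin (h * ω) * (bb1 / b1) : ℝ) : ℂ)) /
    (((bb1 / b1 : ℝ) : ℂ) * (Complex.exp (Complex.I * (h * a : ℝ)) * Complex.exp z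
        - (Real.cos (h * ω) : ℂ)) + ((sinc (h * ω) : ℝ) : ℂ))

/-- the scalar symbol L₂ of the operator L₂^k -/
def symbL2 (h ω a : ℝ) (c1 b1 bb1 : ℝ) (z : ℂ) : ℂ :=
  ((Real.cos (c1 * h * ω) : ℝ) : ℂ) + ((c1 * sinc (c1 * h * ω) : ℝ) : ℂ) * symbL1 h ω a b1 bb1 z

/-- the scalar symbol L of the operator L^k -/
def symbL (h ω a : ℝ) (c1 b1 bb1 : ℝ) (z : ℂ) : ℂ :=
  (Complex.exp (Complex.I * (h * a : ℝ)) * Complex.exp z - (Real.cos (h * ω) : ℂ)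
      - ((sinc (h * ω) : ℝ) : ℂ) * symbL1 h ω a b1 bb1 z) /
    ((bb1 : ℂ) * symbL2 h ω a c1 b1 bb1 z)

/-- Taylor expansion at z = 0 of the scalar symbol L of the operator
L^k for ERKN coefficients satisfying the symmetry conditions. -/
theorem symbL_taylor_symmetric
    (h ω a : ℝ) (hh : 0 < h) (hω : 0 < ω) (hsin : Real.sin (h * ω) ≠ 0)
    (c1 : ℝ) (hc1 : c1 ∈ Set.Icc (0 : ℝ) 1) (b1f bb1f : ℝ → ℝ)
    -- symmetry conditions
    (hc1sym : c1 = 1 / 2)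
    (hsym1 : ∀ x : ℝ, 0 ≤ x → bb1f x = sinc x * b1f x - Real.cos x * bb1f x)
    (hsym2 : ∀ x : ℝ, 0 ≤ x → Real.cos (c1 * x) * bb1f x = c1 * sinc (c1 * x) * b1f x)
    (hb1 : b1f (h * ω) ≠ 0) (hbb1 : bb1f (h * ω) ≠ 0)
    (hcos : Real.cos (h * ω / 2) ≠ 0)
    -- the denominators of L₁ and L at z = 0 do not vanish
    (hden1 : ((bb1f (h * ω) / b1f (h * ω) : ℝ) : ℂ) *
        (Complex.exp (Complex.I * (h * a : ℝ)) - (Real.cos (h * ω) : ℂ))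
        + ((sinc (h * ω) : ℝ) : ℂ) ≠ 0)
    (hden2 : ((bb1f (h * ω) : ℝ) : ℂ) *
        symbL2 h ω a c1 (b1f (h * ω)) (bb1f (h * ω)) 0 ≠ 0) :
    -- (i) for a = ±ω
    ((a = ω ∨ a = -ω) →
      symbL h ω a c1 (b1f (h * ω)) (bb1f (h * ω)) 0 = 0) ∧
    (a = ω →
      deriv (symbL h ω a c1 (b1f (h * ω)) (bb1f (h * ω))) 0 =
        2 * Complex.I * ((Real.sin (h * ω / 2) / bb1f (h * ω) : ℝ) : ℂ) ∧
      iteratedDeriv 2 (symbL h ω a c1 (b1f (h * ω)) (bb1f (h * ω))) 0 =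
        ((Real.cos (h * ω) * (Real.cos (h * ω / 2))⁻¹ / bb1f (h * ω) : ℝ) : ℂ)) ∧
    (a = -ω →
      deriv (symbL h ω a c1 (b1f (h * ω)) (bb1f (h * ω))) 0 =
        -(2 * Complex.I * ((Real.sin (h * ω / 2) / bb1f (h * ω) : ℝ) : ℂ)) ∧
      iteratedDeriv 2 (symbL h ω a c1 (b1f (h * ω)) (bb1f (h * ω))) 0 =
        ((Real.cos (h * ω) * (Real.cos (h * ω / 2))⁻¹ / bb1f (h * ω) : ℝ) : ℂ)) ∧
    -- (ii) for arbitrary real a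
    (symbL h ω a c1 (b1f (h * ω)) (bb1f (h * ω)) 0 =
      ((2 * (Real.cos (h * ω / 2))⁻¹ *
        Real.sin (h / 2 * (ω + a)) * Real.sin (h / 2 * (ω - a)) / bb1f (h * ω) : ℝ) : ℂ)) ∧
    (deriv (symbL h ω a c1 (b1f (h * ω)) (bb1f (h * ω))) 0 =
      Complex.I * (((Real.cos (h * ω / 2))⁻¹ * Real.sin (h * a) / bb1f (h * ω) : ℝ) : ℂ)) := by
  subst hc1sym
  set x := h * ω with hxdef
  have hxpos : 0 < x := mul_pos hh hω
  have hxne : x ≠ 0 := ne_of_gt hxpos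
  set b1 := b1f x with hb1def
  set bb1 := bb1f x with hbb1def
  set s := Real.sin (x / 2) with hsdef
  set c := Real.cos (x / 2) with hcdef
  -- trig facts
  have hsin2 : Real.sin x = 2 * s * c := by
    rw [hsdef, hcdef, ← Real.sin_two_mul, show 2 * (x / 2) = x by ring]
  have hs : s ≠ 0 := by
    intro h0; apply hsin; rw [hsin2, h0]; ring
  have hpy : s ^ 2 + c ^ 2 = 1 := Real.sin_sq_add_cos_sq _
  have hcosx : Real.cos x = c ^ 2 - s ^ 2 := by
    have h1 := Real.cos_two_mul' (x / 2)
    rw [show 2 * (x / 2) = x by ring] at h1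
    rw [h1]
  -- key symmetry relation
  have key : c * bb1 * x = s * b1 := by
    have h2 := hsym2 x hxpos.le
    rw [show (1:ℝ) / 2 * x = x / 2 by ring] at h2
    rw [sinc, if_neg (by positivity : x / 2 ≠ 0)] at h2
    field_simp at h2
    linarith [h2]
  -- complex versions
  have hb1C : (b1 : ℂ) ≠ 0 := Complex.ofReal_ne_zero.2 hb1
  have hbb1C : (bb1 : ℂ) ≠ 0 := Complex.ofReal_ne_zero.2 hbb1
  have hsC : (s : ℂ) ≠ 0 := Complex.ofReal_ne_zero.2 hs
  have hcC : (c : ℂ) ≠ 0 := Complex.ofReal_ne_zero.2 hcos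
  have hxC : (x : ℂ) ≠ 0 := Complex.ofReal_ne_zero.2 hxne
  have kC : (c : ℂ) * bb1 * x = (s : ℂ) * b1 := by exact_mod_cast key
  have f2C : ((Real.cos x : ℝ) : ℂ) = (c : ℂ) ^ 2 - (s : ℂ) ^ 2 := by exact_mod_cast hcosx
  have pyC : (s : ℂ) ^ 2 + (c : ℂ) ^ 2 = 1 := by exact_mod_cast hpy
  have hsincx : ((sinc x : ℝ) : ℂ) = 2 * s * c / x := by
    rw [sinc, if_neg hxne, hsin2]; push_cast; ring
  have denom_eq : ∀ w : ℂ, ((bb1 / b1 : ℝ) : ℂ) * (w - (Real.cos x : ℂ)) + ((sinc x : ℝ) : ℂ)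
      = (s : ℂ) * (w + 1) / ((x : ℂ) * c) := by
    intro w
    rw [hsincx, f2C]
    push_cast
    field_simp
    linear_combination (w - ((c:ℂ)^2 - (s:ℂ)^2)) * kC + ((s:ℂ) * (b1:ℂ)) * pyC
  have f3C : ((Real.sin x : ℝ) : ℂ) = 2 * s * c := by exact_mod_cast hsin2
  have h0 : Complex.exp (Complex.I * ((h * a : ℝ) : ℂ)) + 1 ≠ 0 := by
    intro h0
    apply hden1
    rw [denom_eq, h0, mul_zero, zero_div]
  have master : ∀ z : ℂ,
      Complex.exp (Complex.I * ((h * a : ℝ) : ℂ)) * Complex.exp z + 1 ≠ 0 →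
      symbL h ω a (1 / 2) b1 bb1 z =
        (Complex.exp (Complex.I * ((h * a : ℝ) : ℂ)) * Complex.exp z
          + (Complex.exp (Complex.I * ((h * a : ℝ) : ℂ)) * Complex.exp z)⁻¹
          - 2 * ((Real.cos x : ℝ) : ℂ)) / (2 * (bb1 : ℂ) * (c : ℝ)) := by
    intro z hz
    set E := Complex.exp (Complex.I * ((h * a : ℝ) : ℂ)) * Complex.exp z with hE
    have hEne : E ≠ 0 := mul_ne_zero (Complex.exp_ne_zero _) (Complex.exp_ne_zero _)
    have hnum : x * Real.sin x * (bb1 / b1) = 2 * s ^ 2 := by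
      rw [hsin2]; field_simp; linear_combination key
    have e1 : symbL1 h ω a b1 bb1 z = (x : ℂ) * c * (E - 1) / ((s : ℂ) * (E + 1)) := by
      unfold symbL1
      rw [← hxdef, ← hE, denom_eq, hnum, f2C]
      push_cast
      field_simp
      linear_combination (-1 : ℂ) * pyC
    have e2 : symbL2 h ω a (1 / 2) b1 bb1 z = 2 * (c : ℂ) * E / (E + 1) := by
      unfold symbL2
      rw [e1, show (1:ℝ) / 2 * h * ω = x / 2 by rw [hxdef]; ring,
        sinc, if_neg (by positivity : x / 2 ≠ 0), ← hsdef, ← hcdef]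
      push_cast
      field_simp
      ring
    unfold symbL
    rw [← hxdef, ← hE, e1, e2, hsincx, f2C]
    field_simp [hsC, hxC, hbb1C, hcC, hEne, hz]
    linear_combination (1 - E) * pyC
  -- the model function g
  set θ : ℂ := Complex.I * ((h * a : ℝ) : ℂ) with hθ
  set g : ℂ → ℂ := fun w =>
    (Complex.exp (θ + w) + Complex.exp (-(θ + w)) - 2 * ((Real.cos x : ℝ) : ℂ)) /
      (2 * (bb1 : ℂ) * ((c : ℝ) : ℂ)) with hg
  have heq : symbL h ω a (1 / 2) b1 bb1 =ᶠ[nhds (0 : ℂ)] g := by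
    have hcont : ContinuousAt (fun w : ℂ => Complex.exp θ * Complex.exp w + 1) 0 := by
      fun_prop
    have h0' : Complex.exp θ * Complex.exp (0 : ℂ) + 1 ≠ 0 := by
      rw [Complex.exp_zero, mul_one]; exact h0
    filter_upwards [hcont.eventually_ne h0'] with w hw
    rw [master w hw, hg]
    simp only [Complex.exp_add, Complex.exp_neg]
  have hgd : ∀ w : ℂ, HasDerivAt g
      ((Complex.exp (θ + w) - Complex.exp (-(θ + w))) / (2 * (bb1 : ℂ) * ((c : ℝ) : ℂ))) w := by
    intro w
    have h1 : HasDerivAt (fun w : ℂ => Complex.exp (θ + w)) (Complex.exp (θ + w)) w := by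
      simpa using ((hasDerivAt_id w).const_add θ).cexp
    have h2 : HasDerivAt (fun w : ℂ => Complex.exp (-(θ + w))) (-Complex.exp (-(θ + w))) w := by
      simpa using (((hasDerivAt_id w).const_add θ).neg).cexp
    have := ((h1.add h2).sub_const (2 * ((Real.cos x : ℝ) : ℂ))).div_const
      (2 * (bb1 : ℂ) * ((c : ℝ) : ℂ))
    simpa [hg, sub_eq_add_neg] using this
  have hgderiv : deriv g = fun w =>
      (Complex.exp (θ + w) - Complex.exp (-(θ + w))) / (2 * (bb1 : ℂ) * ((c : ℝ) : ℂ)) :=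
    funext fun w => (hgd w).deriv
  have hgd2 : ∀ w : ℂ, HasDerivAt (deriv g)
      ((Complex.exp (θ + w) + Complex.exp (-(θ + w))) / (2 * (bb1 : ℂ) * ((c : ℝ) : ℂ))) w := by
    intro w
    rw [hgderiv]
    have h1 : HasDerivAt (fun w : ℂ => Complex.exp (θ + w)) (Complex.exp (θ + w)) w := by
      simpa using ((hasDerivAt_id w).const_add θ).cexp
    have h2 : HasDerivAt (fun w : ℂ => Complex.exp (-(θ + w))) (-Complex.exp (-(θ + w))) w := by
      simpa using (((hasDerivAt_id w).const_add θ).neg).cexp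
    have := (h1.sub h2).div_const (2 * (bb1 : ℂ) * ((c : ℝ) : ℂ))
    simpa [sub_neg_eq_add] using this
  -- values at 0
  have hval : symbL h ω a (1 / 2) b1 bb1 0 =
      (Complex.exp θ + Complex.exp (-θ) - 2 * ((Real.cos x : ℝ) : ℂ)) /
        (2 * (bb1 : ℂ) * ((c : ℝ) : ℂ)) := by
    rw [heq.eq_of_nhds, hg]; simp
  have hder : deriv (symbL h ω a (1 / 2) b1 bb1) 0 =
      (Complex.exp θ - Complex.exp (-θ)) / (2 * (bb1 : ℂ) * ((c : ℝ) : ℂ)) := by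
    rw [heq.deriv_eq, hgderiv]; simp
  have hder2 : iteratedDeriv 2 (symbL h ω a (1 / 2) b1 bb1) 0 =
      (Complex.exp θ + Complex.exp (-θ)) / (2 * (bb1 : ℂ) * ((c : ℝ) : ℂ)) := by
    rw [iteratedDeriv_succ, iteratedDeriv_one, Filter.EventuallyEq.deriv_eq heq.deriv,
      (hgd2 0).deriv]
    simp
  -- Euler formulas
  have hEuler : ∀ t : ℝ, Complex.exp (Complex.I * (t : ℂ)) =
      ((Real.cos t : ℝ) : ℂ) + ((Real.sin t : ℝ) : ℂ) * Complex.I := by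
    intro t
    rw [mul_comm, Complex.exp_mul_I, ← Complex.ofReal_cos, ← Complex.ofReal_sin]
  have hEneg : Complex.exp (-θ) =
      ((Real.cos (h * a) : ℝ) : ℂ) - ((Real.sin (h * a) : ℝ) : ℂ) * Complex.I := by
    rw [show -θ = Complex.I * ((-(h * a) : ℝ) : ℂ) by rw [hθ]; push_cast; ring, hEuler]
    rw [Real.cos_neg, Real.sin_neg]
    push_cast
    ring
  have hsum : Complex.exp θ + Complex.exp (-θ) = 2 * ((Real.cos (h * a) : ℝ) : ℂ) := by
    rw [hθ, hEuler, hEneg]; ring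
  have hdiff : Complex.exp θ - Complex.exp (-θ) =
      2 * ((Real.sin (h * a) : ℝ) : ℂ) * Complex.I := by
    rw [hθ, hEuler, hEneg]; ring
  have hreal : Real.cos (h * a) - Real.cos x =
      2 * Real.sin (h / 2 * (ω + a)) * Real.sin (h / 2 * (ω - a)) := by
    rw [hxdef, Real.cos_sub_cos,
      show (h * a + h * ω) / 2 = h / 2 * (ω + a) by ring,
      show (h * a - h * ω) / 2 = -(h / 2 * (ω - a)) by ring, Real.sin_neg]
    ring
  have hrealC : ((Real.cos (h * a) : ℝ) : ℂ) - ((Real.cos x : ℝ) : ℂ) =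
      2 * ((Real.sin (h / 2 * (ω + a)) : ℝ) : ℂ) * ((Real.sin (h / 2 * (ω - a)) : ℝ) : ℂ) := by
    exact_mod_cast hreal
  refine ⟨?_, ?_, ?_, ?_, ?_⟩
  · rintro (h' | h')
    · have hca : Real.cos (h * a) = Real.cos x := by rw [h', ← hxdef]
      rw [hval, hsum, hca]; simp
    · have hca : Real.cos (h * a) = Real.cos x := by
        rw [h', show h * -ω = -(h * ω) by ring, Real.cos_neg, ← hxdef]
      rw [hval, hsum, hca]; simp
  · intro h'
    have hsa : Real.sin (h * a) = 2 * s * c := by rw [h', ← hxdef]; exact hsin2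
    have hca : Real.cos (h * a) = Real.cos x := by rw [h', ← hxdef]
    constructor
    · rw [hder, hdiff, hsa]
      push_cast
      field_simp [hbb1C, hcC]
    · rw [hder2, hsum, hca]
      push_cast
      field_simp [hbb1C, hcC]
  · intro h'
    have hsa : Real.sin (h * a) = -(2 * s * c) := by
      rw [h', show h * -ω = -(h * ω) by ring, Real.sin_neg, ← hxdef, hsin2]
    have hca : Real.cos (h * a) = Real.cos x := by
      rw [h', show h * -ω = -(h * ω) by ring, Real.cos_neg, ← hxdef]
    constructor
    · rw [hder, hdiff, hsa]
      push_cast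
      field_simp [hbb1C, hcC]
    · rw [hder2, hsum, hca]
      push_cast
      field_simp [hbb1C, hcC]
  · rw [hval, hsum]
    push_cast [-Complex.ofReal_cos, -Complex.ofReal_sin]
    field_simp [hbb1C, hcC]
    have hreal2 : Real.cos (h * a) - Real.cos x =
        2 * Real.sin (h * (ω + a) / 2) * Real.sin (h * (ω - a) / 2) := by
      rw [hreal, show h / 2 * (ω + a) = h * (ω + a) / 2 by ring,
        show h / 2 * (ω - a) = h * (ω - a) / 2 by ring]
    have hC : Complex.cos ((h : ℂ) * (a : ℂ)) - Complex.cos ((x : ℝ) : ℂ) =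
        2 * Complex.sin ((h : ℂ) * ((ω : ℂ) + (a : ℂ)) / 2) *
          Complex.sin ((h : ℂ) * ((ω : ℂ) - (a : ℂ)) / 2) := by
      exact_mod_cast hreal2
    exact_mod_cast hreal2
  · rw [hder, hdiff]
    push_cast [-Complex.ofReal_cos, -Complex.ofReal_sin]
    field_simp [hbb1C, hcC]
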